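/- arXiv:1807.08184 — 3 statements merged into one kernel-verified Lean document; each statement's English description precedes it below -/
import Mathlib

section
/- If ψ is continuous on [0,π] and has a 3-Schoenberg expansion with nonnegative summable coefficients (b_{n,3}) summing to 1, then its 1-Schoenberg coefficient b_{0,1} = (1/π)∫_0^π ψ(θ)dθ satisfies b_{0,1} = Σ_{j=0}^∞ b_{2j,3}/(2j+1). -/
open Filter Real MeasureTheory Polynomial Polynomial.Chebyshev Set

lemma U_eval_one' (n : ℕ) : (U ℝ (n : ℤ)).eval 1 = (n : ℝ) + 1 := by
  induction n using Nat.twoStepInduction with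
  | zero => simp [U_zero]
  | one => norm_num [U_one]
  | more n ih1 ih2 =>
    have h : ((n : ℤ) + 2) = ((n + 2 : ℕ) : ℤ) := by push_cast; ring
    have := U_add_two ℝ (n : ℤ)
    rw [h] at this
    rw [this]
    simp only [eval_sub, eval_mul, eval_X, eval_ofNat]
    have h1 : ((n : ℤ) + 1) = ((n + 1 : ℕ) : ℤ) := by push_cast; ring
    rw [h1, ih1, ih2]
    push_cast
    ring

lemma abs_sin_nat_mul_le' (m : ℕ) (θ : ℝ) : |Real.sin (m * θ)| ≤ m * |Real.sin θ| := by
  induction m with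
  | zero => simp
  | succ m ih =>
    have : Real.sin ((m + 1 : ℕ) * θ) = Real.sin (m * θ) * Real.cos θ + Real.cos (m * θ) * Real.sin θ := by
      push_cast; rw [add_mul, one_mul, Real.sin_add]
    rw [this]
    calc |Real.sin (m * θ) * Real.cos θ + Real.cos (m * θ) * Real.sin θ|
        ≤ |Real.sin (m * θ) * Real.cos θ| + |Real.cos (m * θ) * Real.sin θ| := abs_add_le _ _
      _ ≤ |Real.sin (m * θ)| * 1 + 1 * |Real.sin θ| := by
          rw [abs_mul, abs_mul]
          gcongr <;> [exact Real.abs_cos_le_one θ; exact Real.abs_cos_le_one _]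
      _ ≤ m * |Real.sin θ| * 1 + 1 * |Real.sin θ| := by gcongr
      _ = (m + 1 : ℕ) * |Real.sin θ| := by push_cast; ring

lemma U_abs_le' (n : ℕ) {θ : ℝ} (hθ : θ ∈ Ioo 0 π) :
    |(U ℝ (n : ℤ)).eval (Real.cos θ)| ≤ (n : ℝ) + 1 := by
  have hs : 0 < Real.sin θ := Real.sin_pos_of_pos_of_lt_pi hθ.1 hθ.2
  have h := U_real_cos θ (n : ℤ)
  have key : |(U ℝ (n : ℤ)).eval (Real.cos θ)| * |Real.sin θ| ≤ ((n : ℝ) + 1) * |Real.sin θ| := by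
    rw [← abs_mul, h]
    have h2 : (((n : ℤ) : ℝ) + 1) * θ = ((n + 1 : ℕ) : ℝ) * θ := by push_cast; ring
    rw [h2]
    calc |Real.sin ((n + 1 : ℕ) * θ)| ≤ (n + 1 : ℕ) * |Real.sin θ| := abs_sin_nat_mul_le' _ _
      _ = ((n : ℝ) + 1) * |Real.sin θ| := by push_cast; ring
  exact le_of_mul_le_mul_right key (abs_pos.mpr hs.ne')

lemma integral_U' (n : ℕ) :
    ∫ θ in Ioo (0 : ℝ) π, (U ℝ (n : ℤ)).eval (Real.cos θ) = if Even n then π else 0 := by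
  have hvol : (volume (Ioo (0:ℝ) π)).toReal = π := by
    simp [Real.volume_Ioo, ENNReal.toReal_ofReal Real.pi_pos.le]
  have key : ∀ k : ℕ, 1 ≤ k → ∫ θ in Ioo (0 : ℝ) π, Real.cos (k * θ) = 0 := by
    intro k hk
    rw [← integral_Ioc_eq_integral_Ioo, ← intervalIntegral.integral_of_le Real.pi_pos.le]
    have hk0 : (k : ℝ) ≠ 0 := by positivity
    rw [intervalIntegral.integral_comp_mul_left (fun x => Real.cos x) hk0]
    simp [Real.sin_nat_mul_pi]
  induction n using Nat.twoStepInduction with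
  | zero => simp [U_zero, hvol, Real.pi_pos.le]
  | one =>
      have : ∀ θ ∈ Ioo (0:ℝ) π, (U ℝ ((1:ℕ) : ℤ)).eval (Real.cos θ) = 2 * Real.cos ((1:ℕ) * θ) := by
        intro θ _; simp [U_one]
      rw [setIntegral_congr_fun measurableSet_Ioo this]
      rw [integral_const_mul, key 1 le_rfl]
      simp
  | more n ih1 ih2 =>
      have hid : ∀ θ ∈ Ioo (0:ℝ) π,
          (U ℝ ((n + 2 : ℕ) : ℤ)).eval (Real.cos θ)
            = (U ℝ (n : ℤ)).eval (Real.cos θ) + 2 * Real.cos ((n + 2 : ℕ) * θ) := by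
        intro θ hθ
        have hs : Real.sin θ ≠ 0 := (Real.sin_pos_of_pos_of_lt_pi hθ.1 hθ.2).ne'
        have h1 := U_real_cos θ ((n + 2 : ℕ) : ℤ)
        have h2 := U_real_cos θ (n : ℤ)
        apply mul_right_cancel₀ hs
        have e1 : ((((n + 2 : ℕ) : ℤ) : ℝ) + 1) * θ = ((n : ℝ) + 2) * θ + θ := by push_cast; ring
        have e2 : ((((n : ℕ) : ℤ) : ℝ) + 1) * θ = ((n : ℝ) + 2) * θ - θ := by push_cast; ring
        have e3 : ((n + 2 : ℕ) : ℝ) * θ = ((n : ℝ) + 2) * θ := by push_cast; ring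
        have trig : Real.sin (((((n + 2 : ℕ) : ℤ) : ℝ) + 1) * θ)
            = Real.sin (((((n : ℕ) : ℤ) : ℝ) + 1) * θ)
              + 2 * Real.cos (((n + 2 : ℕ) : ℝ) * θ) * Real.sin θ := by
          rw [e1, e2, e3, Real.sin_add, Real.sin_sub]; ring
        linear_combination h1 + trig - h2
      rw [setIntegral_congr_fun measurableSet_Ioo hid]
      have hi1 : IntegrableOn (fun θ => (U ℝ (n : ℤ)).eval (Real.cos θ)) (Ioo (0:ℝ) π) := by
        have : Continuous fun θ : ℝ => (U ℝ (n : ℤ)).eval (Real.cos θ) :=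
          (Polynomial.continuous _).comp Real.continuous_cos
        exact (this.continuousOn.integrableOn_Icc).mono_set Ioo_subset_Icc_self
      have hi2 : IntegrableOn (fun θ => 2 * Real.cos ((n + 2 : ℕ) * θ)) (Ioo (0:ℝ) π) := by
        have : Continuous fun θ : ℝ => 2 * Real.cos ((n + 2 : ℕ) * θ) := by fun_prop
        exact (this.continuousOn.integrableOn_Icc).mono_set Ioo_subset_Icc_self
      rw [integral_add hi1 hi2, integral_const_mul, key (n + 2) (by omega), ih1]
      simp [Nat.even_add_one, Nat.even_add, parity_simps]

theorem schoenberg_b01_from_dim3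
    (ψ : ℝ → ℝ) (b : ℕ → ℝ)
    (hψ : ContinuousOn ψ (Set.Icc 0 π))
    (hb : ∀ n, 0 ≤ b n) (hsum : HasSum b 1)
    (hexp : ∀ θ ∈ Set.Icc (0 : ℝ) π,
      ψ θ = ∑' n : ℕ, b n * (Polynomial.Chebyshev.U ℝ (n : ℤ)).eval (Real.cos θ)
        / (Polynomial.Chebyshev.U ℝ (n : ℤ)).eval 1) :
    HasSum (fun j : ℕ => b (2 * j) / (2 * (j : ℝ) + 1))
      ((1 / π) * ∫ θ in (0 : ℝ)..π, ψ θ) := by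
  set μ := volume.restrict (Ioo (0:ℝ) π) with hμ
  set F : ℕ → ℝ → ℝ := fun n θ => b n * (U ℝ (n:ℤ)).eval (Real.cos θ) / (U ℝ (n:ℤ)).eval 1
    with hF
  have hFbound : ∀ (n : ℕ), ∀ θ ∈ Ioo (0:ℝ) π, ‖F n θ‖ ≤ b n := by
    intro n θ hθ
    have hpos : (0:ℝ) < (n : ℝ) + 1 := by positivity
    simp only [hF, U_eval_one' n]
    rw [Real.norm_eq_abs, abs_div, abs_mul, abs_of_nonneg (hb n), abs_of_pos hpos,
      div_le_iff₀ hpos]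
    calc b n * |(U ℝ (n:ℤ)).eval (Real.cos θ)| ≤ b n * ((n:ℝ) + 1) := by
          gcongr; exacts [hb n, U_abs_le' n hθ]
      _ = b n * ((n:ℝ) + 1) := rfl
  have hcont : ∀ n : ℕ, Continuous (F n) := by
    intro n
    simp only [hF]
    exact Continuous.div_const (Continuous.mul continuous_const ((Polynomial.continuous _).comp Real.continuous_cos)) _
  have hmain : HasSum (fun n => ∫ θ, F n θ ∂μ) (∫ θ, ψ θ ∂μ) := by
    apply MeasureTheory.hasSum_integral_of_dominated_convergence (bound := fun n _ => b n)
    · exact fun n => (hcont n).aestronglyMeasurable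
    · intro n
      exact (ae_restrict_iff' measurableSet_Ioo).2 (Filter.Eventually.of_forall (hFbound n))
    · exact Filter.Eventually.of_forall fun _ => hsum.summable
    · exact integrable_const _
    · refine (ae_restrict_iff' measurableSet_Ioo).2 (Filter.Eventually.of_forall ?_)
      intro a ha
      have hsummable : Summable (fun n => F n a) :=
        Summable.of_norm_bounded hsum.summable (fun n => hFbound n a ha)
      have h := hsummable.hasSum
      rwa [← hexp a (Ioo_subset_Icc_self ha)] at h
  have hint : ∀ n : ℕ, ∫ θ, F n θ ∂μ = b n / ((n:ℝ)+1) * (if Even n then π else 0) := by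
    intro n
    have he : ∀ θ : ℝ, F n θ = (b n / ((n:ℝ)+1)) * (U ℝ (n:ℤ)).eval (Real.cos θ) := by
      intro θ; simp only [hF, U_eval_one' n]; ring
    simp_rw [he]
    rw [MeasureTheory.integral_const_mul]
    rw [hμ, integral_U' n]
  simp_rw [hint] at hmain
  have hzero : ∀ x ∉ Set.range (fun j : ℕ => 2 * j),
      (fun n : ℕ => b n / ((n:ℝ)+1) * (if Even n then π else 0)) x = 0 := by
    intro x hx
    have : ¬ Even x := by
      simp only [Set.mem_range] at hx
      rintro ⟨k, hk⟩; exact hx ⟨k, by omega⟩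
    simp [this]
  have hinj : Function.Injective (fun j : ℕ => 2 * j) := fun a b h => by
    simpa using h
  have h2 := (Function.Injective.hasSum_iff hinj hzero).2 hmain
  have h3 : HasSum (fun j : ℕ => b (2*j) / (2*(j:ℝ)+1) * π) (∫ θ, ψ θ ∂μ) := by
    convert h2 using 2 with j
    simp [Function.comp, Nat.even_mul]
  have h4 := h3.div_const π
  have hπ : (π : ℝ) ≠ 0 := Real.pi_ne_zero
  have h5 : (fun j : ℕ => b (2*j) / (2*(j:ℝ)+1) * π / π) = fun j : ℕ => b (2*j) / (2*(j:ℝ)+1) := by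
    funext j; field_simp
  rw [h5] at h4
  have hI : ∫ θ in (0:ℝ)..π, ψ θ = ∫ θ, ψ θ ∂μ := by
    rw [intervalIntegral.integral_of_le Real.pi_pos.le, hμ,
      ← MeasureTheory.integral_Ioc_eq_integral_Ioo]
  rw [hI, one_div, inv_mul_eq_div]
  exact h4
end

section
/- For integers q ≥ 2, m, n ≥ 0, define w^{q−2}_{m,n} = (m+n+q−2)·m·(n+1)/((m+q−2)(n+q−1)(m+n+q)). Then for all k ≥ 0, Π_{j=0}^k w^{q−2}_{m+j,n+j} ≤ exp(−Σ_{j=0}^k ((q−2)/(m+j+q−2) + (q−2)/(n+j+q−1) + 2/(m+n+2j+q))), and consequently Π_{j=0}^∞ w^{q−2}_{m+j,n+j} = 0. -/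
open Filter

/-- `w^{q-2}_{m,n} = (m+n+q-2)·m·(n+1)/((m+q-2)(n+q-1)(m+n+q))`. -/
noncomputable def wC (q m n : ℕ) : ℝ :=
  ((m : ℝ) + n + q - 2) * m * ((n : ℝ) + 1)
    / (((m : ℝ) + q - 2) * ((n : ℝ) + q - 1) * ((m : ℝ) + n + q))

lemma frac_le_exp (A d : ℝ) (hA : 0 ≤ A) (hd : 0 ≤ d) :
    A / (A + d) ≤ Real.exp (-(d / (A + d))) := by
  rcases eq_or_lt_of_le (add_nonneg hA hd) with h | h
  · rw [← h, div_zero]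
    exact (Real.exp_pos _).le
  · have h1 : A / (A + d) = 1 - d / (A + d) := by field_simp; ring
    rw [h1]
    have := Real.add_one_le_exp (-(d / (A + d)))
    linarith

lemma wC_nonneg (q M N : ℕ) (hq : 2 ≤ q) : 0 ≤ wC q M N := by
  have hq2 : (2:ℝ) ≤ q := by exact_mod_cast hq
  have hM : (0:ℝ) ≤ M := Nat.cast_nonneg M
  have hN : (0:ℝ) ≤ N := Nat.cast_nonneg N
  apply div_nonneg
  · apply mul_nonneg (mul_nonneg (by linarith) hM); linarith
  · apply mul_nonneg (mul_nonneg (by linarith) (by linarith)); linarith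

lemma wC_le (q M N : ℕ) (hq : 2 ≤ q) :
    wC q M N ≤ Real.exp (-(((q:ℝ)-2)/((M:ℝ)+q-2) + ((q:ℝ)-2)/((N:ℝ)+q-1)
      + 2/((M:ℝ)+N+q))) := by
  have hq2 : (2:ℝ) ≤ q := by exact_mod_cast hq
  have hM : (0:ℝ) ≤ M := Nat.cast_nonneg M
  have hN : (0:ℝ) ≤ N := Nat.cast_nonneg N
  have h1 := frac_le_exp (M:ℝ) ((q:ℝ)-2) hM (by linarith)
  have h2 := frac_le_exp ((N:ℝ)+1) ((q:ℝ)-2) (by linarith) (by linarith)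
  have h3 := frac_le_exp ((M:ℝ)+N+q-2) 2 (by linarith) (by norm_num)
  have e1 : (M:ℝ) + ((q:ℝ)-2) = (M:ℝ)+q-2 := by ring
  have e2 : ((N:ℝ)+1) + ((q:ℝ)-2) = (N:ℝ)+q-1 := by ring
  have e3 : ((M:ℝ)+N+q-2) + 2 = (M:ℝ)+N+q := by ring
  rw [e1] at h1; rw [e2] at h2; rw [e3] at h3
  have hw : wC q M N = ((M:ℝ)/((M:ℝ)+q-2)) * (((N:ℝ)+1)/((N:ℝ)+q-1))
      * (((M:ℝ)+N+q-2)/((M:ℝ)+N+q)) := by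
    rw [wC, div_mul_div_comm, div_mul_div_comm]
    congr 1
    ring
  have n1 : (0:ℝ) ≤ (M:ℝ)/((M:ℝ)+q-2) := div_nonneg hM (by linarith)
  have n2 : (0:ℝ) ≤ ((N:ℝ)+1)/((N:ℝ)+q-1) := div_nonneg (by linarith) (by linarith)
  have n3 : (0:ℝ) ≤ ((M:ℝ)+N+q-2)/((M:ℝ)+N+q) := div_nonneg (by linarith) (by linarith)
  calc wC q M N
      ≤ Real.exp (-(((q:ℝ)-2)/((M:ℝ)+q-2))) * Real.exp (-(((q:ℝ)-2)/((N:ℝ)+q-1)))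
        * Real.exp (-(2/((M:ℝ)+N+q))) := by
        rw [hw]
        exact mul_le_mul (mul_le_mul h1 h2 n2 (Real.exp_pos _).le) h3 n3
          (mul_nonneg (Real.exp_pos _).le (Real.exp_pos _).le)
    _ = Real.exp (-(((q:ℝ)-2)/((M:ℝ)+q-2) + ((q:ℝ)-2)/((N:ℝ)+q-1) + 2/((M:ℝ)+N+q))) := by
        rw [← Real.exp_add, ← Real.exp_add]
        ring_nf

theorem product_w_bound_and_vanishing (q m n : ℕ) (hq : 2 ≤ q) :
    (∀ k : ℕ,
      ∏ j ∈ Finset.range (k + 1), wC q (m + j) (n + j)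
        ≤ Real.exp (-(∑ j ∈ Finset.range (k + 1),
            (((q : ℝ) - 2) / ((m : ℝ) + j + q - 2)
              + ((q : ℝ) - 2) / ((n : ℝ) + j + q - 1)
              + 2 / ((m : ℝ) + n + 2 * j + q))))) ∧
    Tendsto (fun k : ℕ => ∏ j ∈ Finset.range (k + 1), wC q (m + j) (n + j))
      atTop (nhds 0) := by
  have hq2 : (2:ℝ) ≤ q := by exact_mod_cast hq
  set t : ℕ → ℝ := fun j => ((q : ℝ) - 2) / ((m : ℝ) + j + q - 2)
      + ((q : ℝ) - 2) / ((n : ℝ) + j + q - 1)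
      + 2 / ((m : ℝ) + n + 2 * j + q) with ht
  have key : ∀ j : ℕ, wC q (m + j) (n + j) ≤ Real.exp (-(t j)) := by
    intro j
    calc wC q (m + j) (n + j)
        ≤ Real.exp (-(((q:ℝ)-2)/(((m+j:ℕ):ℝ)+q-2) + ((q:ℝ)-2)/(((n+j:ℕ):ℝ)+q-1)
            + 2/(((m+j:ℕ):ℝ)+((n+j:ℕ):ℝ)+q))) := wC_le q (m+j) (n+j) hq
      _ = Real.exp (-(t j)) := by
          simp only [ht]
          congr 1
          push_cast
          ring
  have hbound : ∀ k : ℕ, ∏ j ∈ Finset.range (k + 1), wC q (m + j) (n + j)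
      ≤ Real.exp (-(∑ j ∈ Finset.range (k + 1), t j)) := by
    intro k
    calc ∏ j ∈ Finset.range (k + 1), wC q (m + j) (n + j)
        ≤ ∏ j ∈ Finset.range (k + 1), Real.exp (-(t j)) :=
          Finset.prod_le_prod (fun j _ => wC_nonneg q (m+j) (n+j) hq) (fun j _ => key j)
      _ = Real.exp (∑ j ∈ Finset.range (k + 1), -(t j)) := (Real.exp_sum _ _).symm
      _ = Real.exp (-(∑ j ∈ Finset.range (k + 1), t j)) := by rw [Finset.sum_neg_distrib]
  refine ⟨hbound, ?_⟩
  -- divergence of the sum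
  have hc : (0:ℝ) < (m:ℝ) + n + q := by
    have hM : (0:ℝ) ≤ m := Nat.cast_nonneg m
    have hN : (0:ℝ) ≤ n := Nat.cast_nonneg n
    linarith
  have hlow : ∀ j : ℕ, (2 / ((m:ℝ) + n + q)) * (1 / ((j:ℝ) + 1)) ≤ t j := by
    intro j
    have hj : (0:ℝ) ≤ j := Nat.cast_nonneg j
    have hM : (0:ℝ) ≤ m := Nat.cast_nonneg m
    have hN : (0:ℝ) ≤ n := Nat.cast_nonneg n
    have d1 : (0:ℝ) ≤ ((q:ℝ)-2)/((m:ℝ)+j+q-2) := div_nonneg (by linarith) (by linarith)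
    have d2 : (0:ℝ) ≤ ((q:ℝ)-2)/((n:ℝ)+j+q-1) := div_nonneg (by linarith) (by linarith)
    have h1 : (0:ℝ) < (m:ℝ) + n + 2*j + q := by linarith
    have h2 : (m:ℝ) + n + 2*j + q ≤ ((m:ℝ)+n+q) * ((j:ℝ)+1) := by nlinarith
    have h3 : 2 / (((m:ℝ)+n+q) * ((j:ℝ)+1)) ≤ 2 / ((m:ℝ) + n + 2*j + q) :=
      div_le_div_of_nonneg_left (by norm_num) h1 h2
    have h4 : (2 / ((m:ℝ) + n + q)) * (1 / ((j:ℝ) + 1)) = 2 / (((m:ℝ)+n+q) * ((j:ℝ)+1)) := by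
      rw [div_mul_div_comm, mul_one]
    rw [h4]
    simp only [ht]
    linarith
  have hdivH : Tendsto (fun k : ℕ => ∑ j ∈ Finset.range (k+1), (1 / ((j:ℝ) + 1))) atTop atTop := by
    have := Real.tendsto_sum_range_one_div_nat_succ_atTop
    exact this.comp (tendsto_add_atTop_nat 1)
  have hdiv : Tendsto (fun k : ℕ => ∑ j ∈ Finset.range (k+1), t j) atTop atTop := by
    apply tendsto_atTop_mono (fun k => ?_)
      (hdivH.const_mul_atTop (by positivity : (0:ℝ) < 2 / ((m:ℝ)+n+q)))
    rw [Finset.mul_sum]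
    exact Finset.sum_le_sum (fun j _ => hlow j)
  have hexp : Tendsto (fun k : ℕ => Real.exp (-(∑ j ∈ Finset.range (k+1), t j)))
      atTop (nhds 0) :=
    Real.tendsto_exp_atBot.comp (tendsto_neg_atTop_atBot.comp hdiv)
  exact squeeze_zero (fun k => Finset.prod_nonneg (fun j _ => wC_nonneg q (m+j) (n+j) hq))
    hbound hexp
end

section
/- Assume the recursion a^{q−1}_{m−1,n} = ((m+q−2)(n+q−1)/((q−1)(m+n+q−2)))·a^{q−2}_{m−1,n} − (m(n+1)/((q−1)(m+n+q)))·a^{q−2}_{m,n+1} holds for the Schoenberg coefficients of φ ∈ Υ_{2(q+1)} (q ≥ 2), for all m ≥ 1, n ≥ 0, where a^{α}_{m,n} ≥ 0. Then a^{q−2}_{m,n} > 0 if and only if there exists j ≥ 0 with a^{q−1}_{m+j,n+j} > 0. -/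
theorem schoenberg_support_transfer
    (q : ℕ) (hq : 2 ≤ q) (a A : ℕ → ℕ → ℝ)
    (ha : ∀ m n, 0 ≤ a m n) (hA : ∀ m n, 0 ≤ A m n)
    (hsum : Summable (fun p : ℕ × ℕ => a p.1 p.2))
    (hrec : ∀ m n : ℕ, 1 ≤ m →
      A (m - 1) n
        = (((m : ℝ) + q - 2) * ((n : ℝ) + q - 1) / (((q : ℝ) - 1) * ((m : ℝ) + n + q - 2)))
            * a (m - 1) n
          - ((m : ℝ) * ((n : ℝ) + 1) / (((q : ℝ) - 1) * ((m : ℝ) + n + q))) * a m (n + 1)) :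
    ∀ m n : ℕ, 0 < a m n ↔ ∃ j : ℕ, 0 < A (m + j) (n + j) := by
  have hQ : (2:ℝ) ≤ (q:ℝ) := by exact_mod_cast hq
  have key : ∀ m n : ℕ, ∃ c d : ℝ, 0 < d ∧ d ≤ c ∧
      A m n = c * a m n - d * a (m+1) (n+1) := by
    intro m n
    have h := hrec (m+1) n (by omega)
    simp only [Nat.add_sub_cancel] at h
    push_cast at h
    have hm : (0:ℝ) ≤ (m:ℝ) := Nat.cast_nonneg m
    have hn : (0:ℝ) ≤ (n:ℝ) := Nat.cast_nonneg n
    refine ⟨_, _, ?_, ?_, h⟩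
    · apply div_pos
      · nlinarith
      · nlinarith
    · rw [div_le_div_iff₀ (by nlinarith) (by nlinarith)]
      nlinarith [mul_nonneg hm hn, mul_nonneg (mul_nonneg hm hn) (sub_nonneg.2 hQ),
        mul_nonneg hm (sub_nonneg.2 hQ), mul_nonneg hn (sub_nonneg.2 hQ),
        sq_nonneg ((q:ℝ) - 2), mul_nonneg (mul_nonneg hm hn) hm]
  intro m n
  constructor
  · -- forward: a m n > 0 → ∃ j, A > 0
    intro h0
    by_contra hne
    push_neg at hne
    have hAzero : ∀ j, A (m+j) (n+j) = 0 := fun j =>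
      le_antisymm (hne j) (hA _ _)
    have mono : ∀ j, a m n ≤ a (m+j) (n+j) := by
      intro j
      induction j with
      | zero => simp
      | succ k ih =>
        obtain ⟨c, d, hd, hdc, hk⟩ := key (m+k) (n+k)
        rw [hAzero k] at hk
        have hak : 0 ≤ a (m+k) (n+k) := ha _ _
        have : a (m+k) (n+k) ≤ a (m+k+1) (n+k+1) := by
          nlinarith
        calc a m n ≤ a (m+k) (n+k) := ih
          _ ≤ a (m+k+1) (n+k+1) := this
    have hs : Summable (fun j : ℕ => a (m+j) (n+j)) := by
      have : (fun j : ℕ => a (m+j) (n+j))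
          = (fun p : ℕ × ℕ => a p.1 p.2) ∘ (fun j => (m+j, n+j)) := rfl
      rw [this]
      exact hsum.comp_injective (fun i j hij => by
        simp [Prod.ext_iff] at hij; omega)
    have ht := hs.tendsto_atTop_zero
    obtain ⟨j, hj⟩ := (ht.eventually_lt_const h0).exists
    linarith [mono j]
  · -- backward
    rintro ⟨j, hj⟩
    have base : 0 < a (m+j) (n+j) := by
      obtain ⟨c, d, hd, hdc, hk⟩ := key (m+j) (n+j)
      rw [hk] at hj
      have := mul_nonneg hd.le (ha (m+j+1) (n+j+1))
      nlinarith [lt_of_lt_of_le hd hdc]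
    have step : ∀ k, 0 < a (m+k+1) (n+k+1) → 0 < a (m+k) (n+k) := by
      intro k hk1
      obtain ⟨c, d, hd, hdc, hk⟩ := key (m+k) (n+k)
      have hAk := hA (m+k) (n+k)
      rw [hk] at hAk
      nlinarith [mul_pos hd hk1, lt_of_lt_of_le hd hdc]
    have down : ∀ k, 0 < a (m+k) (n+k) → 0 < a m n := by
      intro k
      induction k with
      | zero => simp only [Nat.add_zero]; exact id
      | succ i ih => exact fun h => ih (step i h)
    exact down j base
end
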